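/- Let H : ℝⁿ × ℝⁿ → ℝ be continuously differentiable and Δ : ℝⁿ × ℝⁿ → ℝⁿ × ℝⁿ be a map (the impact map). Let γₖ, γₗ : ℝⁿ → ℝⁿ be continuously differentiable maps with symmetric Jacobians such that q ↦ H(q, γₖ(q)) and q ↦ H(q, γₗ(q)) have vanishing derivative everywhere. Let t₀ < t* < t_f and let c : (t₀, t_f) → ℝⁿ be a continuous curve, differentiable on (t₀, t*) and on (t*, t_f), satisfying c'(t) = ∂H/∂p(c(t), γₖ(c(t))) for t ∈ (t₀, t*), c'(t) = ∂H/∂p(c(t), γₗ(c(t))) for t ∈ (t*, t_f), and the impact condition (c(t*), γₗ(c(t*))) = Δ(c(t*), γₖ(c(t*))). Define x(t) = (c(t), γₖ(c(t))) for t < t* and x(t) = (c(t), γₗ(c(t))) for t ≥ t*. Then x satisfies Hamilton's equations q̇ = ∂H/∂p, ṗ = −∂H/∂q on (t₀, t*) and on (t*, t_f), and x(t*) = Δ(lim_{t → t*⁻} x(t)); that is, x is an integral curve of the hybrid dynamics. -/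

import Mathlib

/-- Partial derivative of `H` with respect to `qⁱ` at a point of phase space `ℝⁿ × ℝⁿ`. -/
noncomputable def partialQ {n : ℕ} (H : (Fin n → ℝ) × (Fin n → ℝ) → ℝ)
    (x : (Fin n → ℝ) × (Fin n → ℝ)) (i : Fin n) : ℝ :=
  fderiv ℝ H x (Pi.single i 1, 0)

/-- Partial derivative of `H` with respect to `pᵢ` at a point of phase space `ℝⁿ × ℝⁿ`. -/
noncomputable def partialP {n : ℕ} (H : (Fin n → ℝ) × (Fin n → ℝ) → ℝ)
    (x : (Fin n → ℝ) × (Fin n → ℝ)) (i : Fin n) : ℝ :=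
  fderiv ℝ H x (0, Pi.single i 1)

/-- Hybrid Hamilton–Jacobi theorem, implication (1) ⟹ (2), for a single impact: if the
closed 1-forms `γₖ, γₗ` solve the Hamilton–Jacobi equation and are `Δ`-related at the
impact point, then the piecewise lift `x` of any curve `c` tangent to the projected
vector fields is an integral curve of the hybrid dynamics: it satisfies Hamilton's
equations on `(t₀, t*)` and on `(t*, t_f)` and `x(t*) = Δ(lim_{t → t*⁻} x(t))`. -/
lemma hj_key {n : ℕ} (H : (Fin n → ℝ) × (Fin n → ℝ) → ℝ) (hH : ContDiff ℝ 1 H)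
    (γ : (Fin n → ℝ) → (Fin n → ℝ)) (hγ : ContDiff ℝ 1 γ)
    (hsym : ∀ (q : Fin n → ℝ) (i j : Fin n),
      fderiv ℝ γ q (Pi.single j 1) i = fderiv ℝ γ q (Pi.single i 1) j)
    (hHJ : ∀ q : Fin n → ℝ, fderiv ℝ (fun q => H (q, γ q)) q = 0)
    (q : Fin n → ℝ) (i : Fin n) :
    fderiv ℝ γ q (fun j => partialP H (q, γ q) j) i = -(partialQ H (q, γ q) i) := by
  set D := fderiv ℝ γ q with hD
  set L := fderiv ℝ H (q, γ q) with hL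
  have hγd : DifferentiableAt ℝ γ q := (hγ.differentiable one_ne_zero) q
  have hHd : DifferentiableAt ℝ H (q, γ q) := (hH.differentiable one_ne_zero) _
  -- representation of vectors as sums of basis vectors
  have hrep : ∀ w : Fin n → ℝ, w = ∑ j, w j • (Pi.single j 1 : Fin n → ℝ) := by
    intro w
    funext k
    simp [Finset.sum_apply, Pi.single_apply, Finset.sum_ite_eq]
  -- L applied to (0, w)
  have hw : ∀ w : Fin n → ℝ, L (0, w) = ∑ j, w j * L (0, Pi.single j 1) := by
    intro w
    have h2 : ((0, w) : (Fin n → ℝ) × (Fin n → ℝ))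
        = ∑ j, w j • ((0, Pi.single j 1) : (Fin n → ℝ) × (Fin n → ℝ)) := by
      have := hrep w
      rw [Prod.ext_iff]
      constructor
      · simp [Prod.fst_sum]
      · rw [Prod.snd_sum]; simpa using this
    rw [h2, map_sum]
    refine Finset.sum_congr rfl fun j _ => ?_
    rw [map_smul, smul_eq_mul]
  -- chain rule and HJ
  have hF : HasFDerivAt (fun q : Fin n → ℝ => (q, γ q))
      ((ContinuousLinearMap.id ℝ (Fin n → ℝ)).prod D) q :=
    HasFDerivAt.prodMk (hasFDerivAt_id q) hγd.hasFDerivAt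
  have hcomp : HasFDerivAt (fun q => H (q, γ q))
      (L.comp ((ContinuousLinearMap.id ℝ (Fin n → ℝ)).prod D)) q :=
    hHd.hasFDerivAt.comp q hF
  have hz : (L.comp ((ContinuousLinearMap.id ℝ (Fin n → ℝ)).prod D)) = 0 := by
    rw [← hcomp.fderiv]; exact hHJ q
  have hHJ' : L (Pi.single i 1, D (Pi.single i 1)) = 0 := by
    have := congrArg (fun f : (Fin n → ℝ) →L[ℝ] ℝ => f (Pi.single i 1)) hz
    simpa using this
  have hsplit : L (Pi.single i 1, D (Pi.single i 1))
      = L (Pi.single i 1, 0) + L (0, D (Pi.single i 1)) := by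
    rw [← map_add]
    congr 1
    simp
  -- compute D v i
  have hDv : D (fun j => partialP H (q, γ q) j) i
      = ∑ j, partialP H (q, γ q) j * D (Pi.single j 1) i := by
    conv_lhs => rw [hrep (fun j => partialP H (q, γ q) j)]
    rw [map_sum]
    simp [Finset.sum_apply, smul_eq_mul]
  rw [hDv]
  have : ∀ j, partialP H (q, γ q) j * D (Pi.single j 1) i
      = D (Pi.single i 1) j * L (0, Pi.single j 1) := by
    intro j
    rw [hsym q i j, mul_comm]
    rfl
  rw [Finset.sum_congr rfl (fun j _ => this j), ← hw]
  have h0 : L (Pi.single i 1, 0) + L (0, D (Pi.single i 1)) = 0 := by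
    rw [← hsplit]; exact hHJ'
  have : L (0, D (Pi.single i 1)) = -(L (Pi.single i 1, 0)) := by linarith
  rw [this]
  rfl

theorem hybrid_hamilton_jacobi {n : ℕ}
    (H : (Fin n → ℝ) × (Fin n → ℝ) → ℝ) (hH : ContDiff ℝ 1 H)
    (Δ : (Fin n → ℝ) × (Fin n → ℝ) → (Fin n → ℝ) × (Fin n → ℝ))
    (γk γl : (Fin n → ℝ) → (Fin n → ℝ))
    (hγk : ContDiff ℝ 1 γk) (hγl : ContDiff ℝ 1 γl)
    (hsymk : ∀ (q : Fin n → ℝ) (i j : Fin n),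
      fderiv ℝ γk q (Pi.single j 1) i = fderiv ℝ γk q (Pi.single i 1) j)
    (hsyml : ∀ (q : Fin n → ℝ) (i j : Fin n),
      fderiv ℝ γl q (Pi.single j 1) i = fderiv ℝ γl q (Pi.single i 1) j)
    (hHJk : ∀ q : Fin n → ℝ, fderiv ℝ (fun q => H (q, γk q)) q = 0)
    (hHJl : ∀ q : Fin n → ℝ, fderiv ℝ (fun q => H (q, γl q)) q = 0)
    (t₀ ts t_f : ℝ) (ht₀ : t₀ < ts) (htf : ts < t_f)
    (c : ℝ → (Fin n → ℝ)) (hc : ContinuousOn c (Set.Ioo t₀ t_f))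
    (hck : ∀ t ∈ Set.Ioo t₀ ts,
      HasDerivAt c (fun i => partialP H (c t, γk (c t)) i) t)
    (hcl : ∀ t ∈ Set.Ioo ts t_f,
      HasDerivAt c (fun i => partialP H (c t, γl (c t)) i) t)
    (himpact : (c ts, γl (c ts)) = Δ (c ts, γk (c ts)))
    (x : ℝ → (Fin n → ℝ) × (Fin n → ℝ))
    (hx : ∀ t : ℝ, x t = if t < ts then (c t, γk (c t)) else (c t, γl (c t))) :
    (∀ t ∈ Set.Ioo t₀ ts, ∀ i : Fin n,
      HasDerivAt (fun s => (x s).1 i) (partialP H (x t) i) t ∧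
      HasDerivAt (fun s => (x s).2 i) (-(partialQ H (x t) i)) t) ∧
    (∀ t ∈ Set.Ioo ts t_f, ∀ i : Fin n,
      HasDerivAt (fun s => (x s).1 i) (partialP H (x t) i) t ∧
      HasDerivAt (fun s => (x s).2 i) (-(partialQ H (x t) i)) t) ∧
    (∃ xm : (Fin n → ℝ) × (Fin n → ℝ),
      Filter.Tendsto x (nhdsWithin ts (Set.Iio ts)) (nhds xm) ∧ x ts = Δ xm) := by
  have hx1 : ∀ s, (x s).1 = c s := by
    intro s; rw [hx s]; split <;> rfl
  refine ⟨?_, ?_, ?_⟩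
  · -- before impact
    intro t ht i
    have hxt : x t = (c t, γk (c t)) := by rw [hx t, if_pos ht.2]
    have hcd := hck t ht
    constructor
    · have h1 : (fun s => (x s).1 i) = fun s => c s i := by
        funext s; rw [hx1 s]
      rw [h1, hxt]
      exact (hasDerivAt_pi.1 hcd) i
    · -- second component
      have hγd : HasFDerivAt γk (fderiv ℝ γk (c t)) (c t) :=
        ((hγk.differentiable one_ne_zero) (c t)).hasFDerivAt
      have hcomp : HasDerivAt (fun s => γk (c s))
          (fderiv ℝ γk (c t) (fun i => partialP H (c t, γk (c t)) i)) t :=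
        hγd.comp_hasDerivAt t hcd
      have hci : HasDerivAt (fun s => γk (c s) i)
          (fderiv ℝ γk (c t) (fun i => partialP H (c t, γk (c t)) i) i) t :=
        (hasDerivAt_pi.1 hcomp) i
      rw [hj_key H hH γk hγk hsymk hHJk (c t) i] at hci
      have heq : (fun s => (x s).2 i) =ᶠ[nhds t] (fun s => γk (c s) i) := by
        filter_upwards [Iio_mem_nhds ht.2] with s hs
        rw [hx s, if_pos (show s < ts from hs)]
      rw [hxt]
      exact hci.congr_of_eventuallyEq heq
  · -- after impact
    intro t ht i
    have hxt : x t = (c t, γl (c t)) := by rw [hx t, if_neg (not_lt.2 ht.1.le)]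
    have hcd := hcl t ht
    constructor
    · have h1 : (fun s => (x s).1 i) = fun s => c s i := by
        funext s; rw [hx1 s]
      rw [h1, hxt]
      exact (hasDerivAt_pi.1 hcd) i
    · have hγd : HasFDerivAt γl (fderiv ℝ γl (c t)) (c t) :=
        ((hγl.differentiable one_ne_zero) (c t)).hasFDerivAt
      have hcomp : HasDerivAt (fun s => γl (c s))
          (fderiv ℝ γl (c t) (fun i => partialP H (c t, γl (c t)) i)) t :=
        hγd.comp_hasDerivAt t hcd
      have hci : HasDerivAt (fun s => γl (c s) i)
          (fderiv ℝ γl (c t) (fun i => partialP H (c t, γl (c t)) i) i) t :=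
        (hasDerivAt_pi.1 hcomp) i
      rw [hj_key H hH γl hγl hsyml hHJl (c t) i] at hci
      have heq : (fun s => (x s).2 i) =ᶠ[nhds t] (fun s => γl (c s) i) := by
        filter_upwards [Ioi_mem_nhds ht.1] with s hs
        rw [hx s, if_neg (not_lt.2 (le_of_lt hs))]
      rw [hxt]
      exact hci.congr_of_eventuallyEq heq
  · -- the jump
    refine ⟨(c ts, γk (c ts)), ?_, ?_⟩
    · have hcc : ContinuousAt c ts :=
        hc.continuousAt (Ioo_mem_nhds ht₀ htf)
      have hγc : ContinuousAt (fun s => (c s, γk (c s))) ts :=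
        ContinuousAt.prodMk hcc ((hγk.continuous.continuousAt).comp hcc)
      have htend : Filter.Tendsto (fun s => (c s, γk (c s)))
          (nhdsWithin ts (Set.Iio ts)) (nhds (c ts, γk (c ts))) :=
        hγc.continuousWithinAt
      refine htend.congr' ?_
      filter_upwards [self_mem_nhdsWithin] with s (hs : s < ts)
      rw [hx s, if_pos hs]
    · rw [hx ts, if_neg (lt_irrefl ts)]
      exact himpact
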